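/- For λ ∈ (-1,1) and γ real with |γ| < 1, the N×N tridiagonal matrix Θ = 2·P₁ - γ·P₂ is positive definite, where P₁ is diagonal with P₁(1,1)=P₁(N,N)=(1-λ)/(1+λ) and 1 elsewhere, and P₂ has P₂(1,2)=P₂(2,1)=P₂(N-1,N)=P₂(N,N-1)=1-λ, P₂(k,k+1)=P₂(k+1,k)=1 for 2≤k≤N-2, and zeros elsewhere. -/

import Mathlib

open Matrix Polynomial

/-- The N×N discrete PT-symmetric square-well Hamiltonian (0-indexed). -/
noncomputable def Ham (N : ℕ) (l : ℝ) : Matrix (Fin N) (Fin N) ℝ :=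
  Matrix.of fun i j =>
    if (i : ℕ) = j then 2
    else if (j : ℕ) = (i : ℕ) + 1 then
      (if (i : ℕ) = 0 then -1 - l else if (j : ℕ) = N - 1 then -1 + l else -1)
    else if (i : ℕ) = (j : ℕ) + 1 then
      (if (j : ℕ) = 0 then -1 + l else if (i : ℕ) = N - 1 then -1 - l else -1)
    else 0

/-- The diagonal metric with first and last entries (1-λ)/(1+λ). -/
noncomputable def Theta (N : ℕ) (l : ℝ) : Matrix (Fin N) (Fin N) ℝ :=
  Matrix.diagonal fun k => if (k : ℕ) = 0 ∨ (k : ℕ) = N - 1 then (1 - l) / (1 + l) else 1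

/-- The bidiagonal pseudometric. -/
noncomputable def P2 (N : ℕ) (l : ℝ) : Matrix (Fin N) (Fin N) ℝ :=
  Matrix.of fun i j =>
    if (j : ℕ) = (i : ℕ) + 1 ∨ (i : ℕ) = (j : ℕ) + 1 then
      (if min (i : ℕ) (j : ℕ) = 0 ∨ min (i : ℕ) (j : ℕ) = N - 2 then 1 - l else 1)
    else 0

private lemma quad_nonneg (p q c x y : ℝ) (hq : 0 < q) (h : c^2 < p*q) :
    0 ≤ p*x^2 + q*y^2 - 2*c*(x*y) := by
  nlinarith [sq_nonneg (q*y - c*x), sq_nonneg x]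

private lemma quad_pos (p q c x y : ℝ) (hp : 0 < p) (hq : 0 < q) (h : c^2 < p*q)
    (hxy : x ≠ 0 ∨ y ≠ 0) : 0 < p*x^2 + q*y^2 - 2*c*(x*y) := by
  rcases hxy with hx | hy
  · have hx2 : 0 < x^2 := by positivity
    nlinarith [sq_nonneg (q*y - c*x)]
  · have hy2 : 0 < y^2 := by positivity
    nlinarith [sq_nonneg (p*x - c*y)]

private lemma P2_herm (N : ℕ) (l : ℝ) : (P2 N l).IsHermitian := by
  unfold Matrix.IsHermitian
  ext i j
  simp only [conjTranspose_apply, P2, of_apply, star_trivial]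
  have hc : ((i:ℕ) = (j:ℕ)+1 ∨ (j:ℕ) = (i:ℕ)+1) = ((j:ℕ) = (i:ℕ)+1 ∨ (i:ℕ) = (j:ℕ)+1) := by
    rw [or_comm]
  have hm : min (j:ℕ) (i:ℕ) = min (i:ℕ) (j:ℕ) := min_comm _ _
  simp only [hc, hm]

set_option maxHeartbeats 1000000 in
theorem stmt16 (N : ℕ) (hN : 3 ≤ N) (l : ℝ) (hl : l ∈ Set.Ioo (-1 : ℝ) 1)
    (g : ℝ) (hg : |g| < 1) :
    ((2 : ℝ) • Theta N l - g • P2 N l).PosDef := by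
  obtain ⟨hl1, hl2⟩ := hl
  have h1l : (0:ℝ) < 1 - l := by linarith
  have h1l' : (0:ℝ) < 1 + l := by linarith
  have hg2 : g^2 < 1 := by nlinarith [abs_nonneg g, sq_abs g]
  set α : ℝ := (1 - l) / (1 + l) with hα
  have hαpos : 0 < α := div_pos h1l h1l'
  rw [posDef_iff_dotProduct_mulVec]
  constructor
  · -- Hermitian
    have h1 : (Theta N l).IsHermitian := by
      rw [Theta]; exact isHermitian_diagonal _
    have h2 : (P2 N l).IsHermitian := P2_herm N l
    unfold Matrix.IsHermitian at *
    rw [conjTranspose_sub, conjTranspose_smul, conjTranspose_smul, h1, h2]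
    simp
  · intro x hx
    set M := N - 1 with hM
    have hNM : N = M + 1 := by omega
    set x' : ℕ → ℝ := fun k => if h : k < N then x ⟨k, h⟩ else 0 with hx'
    set B : ℕ → ℝ := fun k => if k = 0 ∨ k = N - 2 then 1 - l else 1 with hB
    set p : ℕ → ℝ := fun k => if k = 0 then 2*α else 1 with hp
    set q : ℕ → ℝ := fun k => if k = N - 2 then 2*α else 1 with hq'
    have split : ∀ i j : Fin N, P2 N l i j =
        (if (j:ℕ) = (i:ℕ) + 1 then B (i:ℕ) else 0)
        + (if (i:ℕ) = (j:ℕ) + 1 then B (j:ℕ) else 0) := by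
      intro i j
      simp only [P2, of_apply, hB]
      split_ifs <;> first | ring1 | (exfalso; omega)
    have row1 : ∀ i : Fin N,
        (∑ j : Fin N, (if (j:ℕ) = (i:ℕ) + 1 then B (i:ℕ) else 0) * x j)
          = B (i:ℕ) * x' ((i:ℕ) + 1) := by
      intro i
      by_cases h : (i:ℕ) + 1 < N
      · have : ∀ j : Fin N, ((j:ℕ) = (i:ℕ) + 1) = (j = ⟨(i:ℕ)+1, h⟩) := by
          intro j; rw [Fin.ext_iff]
        simp only [this, ite_mul, zero_mul]
        rw [Finset.sum_ite_eq' Finset.univ (⟨(i:ℕ)+1, h⟩ : Fin N)]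
        simp [hx', h]
      · have hz : ∀ j : Fin N, (if (j:ℕ) = (i:ℕ) + 1 then B (i:ℕ) else 0) * x j = 0 := by
          intro j
          have : (j:ℕ) ≠ (i:ℕ) + 1 := by omega
          simp [this]
        rw [Finset.sum_congr rfl (fun j _ => hz j), Finset.sum_const_zero]
        have h' : ¬ ((i:ℕ) + 1 < N) := h
        simp [hx', h']
    have row2 : ∀ i : Fin N,
        (∑ j : Fin N, (if (i:ℕ) = (j:ℕ) + 1 then B (j:ℕ) else 0) * x j)
          = (if (i:ℕ) = 0 then 0 else B ((i:ℕ) - 1) * x' ((i:ℕ) - 1)) := by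
      intro i
      by_cases h0 : (i:ℕ) = 0
      · have hz : ∀ j : Fin N, (if (i:ℕ) = (j:ℕ) + 1 then B (j:ℕ) else 0) * x j = 0 := by
          intro j
          have : (i:ℕ) ≠ (j:ℕ) + 1 := by omega
          simp [this]
        rw [Finset.sum_congr rfl (fun j _ => hz j), Finset.sum_const_zero]
        simp [h0]
      · have hlt : (i:ℕ) - 1 < N := by omega
        have : ∀ j : Fin N, ((i:ℕ) = (j:ℕ) + 1) = (j = ⟨(i:ℕ)-1, hlt⟩) := by
          intro j; rw [Fin.ext_iff]; simp only [eq_iff_iff]; constructor <;> (intro hh; omega)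
        simp only [this, ite_mul, zero_mul]
        rw [Finset.sum_ite_eq' Finset.univ (⟨(i:ℕ)-1, hlt⟩ : Fin N)]
        simp [hx', hlt, h0]
    -- quadratic form of P2
    have hP2 : x ⬝ᵥ (P2 N l *ᵥ x) = 2 * ∑ k ∈ Finset.range M, B k * (x' k * x' (k+1)) := by
      have hrow : ∀ i : Fin N, (P2 N l *ᵥ x) i
          = B (i:ℕ) * x' ((i:ℕ) + 1)
            + (if (i:ℕ) = 0 then 0 else B ((i:ℕ) - 1) * x' ((i:ℕ) - 1)) := by
        intro i
        rw [Matrix.mulVec, dotProduct]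
        rw [Finset.sum_congr rfl (fun j _ => by rw [split i j, add_mul])]
        rw [Finset.sum_add_distrib, row1 i, row2 i]
      have conv : x ⬝ᵥ (P2 N l *ᵥ x)
          = ∑ k ∈ Finset.range N,
              (B k * (x' k * x' (k+1)) + (if k = 0 then 0 else B (k-1) * (x' (k-1) * x' k))) := by
        rw [dotProduct, ← Fin.sum_univ_eq_sum_range
          (fun k => B k * (x' k * x' (k+1)) + (if k = 0 then 0 else B (k-1) * (x' (k-1) * x' k))) N]
        refine Finset.sum_congr rfl fun i _ => ?_
        rw [hrow i]
        have hxi : x' (i:ℕ) = x i := by simp [hx', i.isLt]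
        rw [← hxi]
        show x' (i:ℕ) * (B (i:ℕ) * x' ((i:ℕ)+1)
            + (if (i:ℕ) = 0 then 0 else B ((i:ℕ)-1) * x' ((i:ℕ)-1)))
          = B (i:ℕ) * (x' (i:ℕ) * x' ((i:ℕ)+1))
            + (if (i:ℕ) = 0 then 0 else B ((i:ℕ)-1) * (x' ((i:ℕ)-1) * x' (i:ℕ)))
        split_ifs <;> ring
      rw [conv, Finset.sum_add_distrib]
      have s1 : ∑ k ∈ Finset.range N, B k * (x' k * x' (k+1))
          = ∑ k ∈ Finset.range M, B k * (x' k * x' (k+1)) := by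
        rw [hNM, Finset.sum_range_succ]
        have : x' (M + 1) = 0 := by simp [hx', hNM]
        simp [this]
      have s2 : ∑ k ∈ Finset.range N, (if k = 0 then 0 else B (k-1) * (x' (k-1) * x' k))
          = ∑ k ∈ Finset.range M, B k * (x' k * x' (k+1)) := by
        rw [hNM, Finset.sum_range_succ']
        simp
      rw [s1, s2]; ring
    -- quadratic form of Theta
    have hTh : x ⬝ᵥ (Theta N l *ᵥ x)
        = ∑ k ∈ Finset.range N, (if k = 0 ∨ k = N - 1 then α else 1) * (x' k)^2 := by
      rw [dotProduct, ← Fin.sum_univ_eq_sum_range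
        (fun k => (if k = 0 ∨ k = N - 1 then α else 1) * (x' k)^2) N]
      refine Finset.sum_congr rfl fun i _ => ?_
      rw [Theta, Matrix.mulVec_diagonal]
      have hxi : x' (i:ℕ) = x i := by simp [hx', i.isLt]
      rw [← hxi]
      show x' (i:ℕ) * ((if (i:ℕ) = 0 ∨ (i:ℕ) = N - 1 then (1-l)/(1+l) else 1) * x' (i:ℕ))
        = (if (i:ℕ) = 0 ∨ (i:ℕ) = N - 1 then α else 1) * (x' (i:ℕ))^2
      rw [hα]
      split_ifs <;> ring
    -- reallocate the diagonal over the edges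
    have halloc : ∑ k ∈ Finset.range N, 2 * ((if k = 0 ∨ k = N - 1 then α else 1) * (x' k)^2)
        = ∑ k ∈ Finset.range M, (p k * (x' k)^2 + q k * (x' (k+1))^2) := by
      rw [Finset.sum_add_distrib]
      have s2 : ∑ k ∈ Finset.range M, q k * (x' (k+1))^2
          = ∑ k ∈ Finset.range N, (if k = 0 then 0 else q (k-1) * (x' k)^2) := by
        rw [hNM, Finset.sum_range_succ']
        simp
      have s1 : ∑ k ∈ Finset.range M, p k * (x' k)^2
          = ∑ k ∈ Finset.range N, (if k < M then p k * (x' k)^2 else 0) := by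
        rw [hNM, Finset.sum_range_succ]
        simp only [lt_self_iff_false, if_false, add_zero]
        exact Finset.sum_congr rfl (fun k hk => by
          rw [if_pos (Finset.mem_range.mp hk)])
      rw [s1, s2, ← Finset.sum_add_distrib]
      refine Finset.sum_congr rfl (fun k hk => ?_)
      have hkN : k < N := Finset.mem_range.mp hk
      simp only [hp, hq']
      split_ifs <;> first | ring1 | (exfalso; omega)
    -- the full quadratic form as a sum over edges
    have hQ : x ⬝ᵥ (((2 : ℝ) • Theta N l - g • P2 N l) *ᵥ x)
        = ∑ k ∈ Finset.range M,
            (p k * (x' k)^2 + q k * (x' (k+1))^2 - 2*(g * B k)*(x' k * x' (k+1))) := by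
      rw [sub_mulVec, smul_mulVec, smul_mulVec, dotProduct_sub,
        dotProduct_smul, dotProduct_smul, smul_eq_mul, smul_eq_mul, hTh, hP2]
      rw [Finset.mul_sum, halloc]
      have hg' : g * (2 * ∑ k ∈ Finset.range M, B k * (x' k * x' (k+1)))
          = ∑ k ∈ Finset.range M, 2*(g * B k)*(x' k * x' (k+1)) := by
        rw [Finset.mul_sum, Finset.mul_sum]
        exact Finset.sum_congr rfl (fun k _ => by ring)
      rw [hg', ← Finset.sum_sub_distrib]
    -- positivity facts
    have hfacts : ∀ k, k < M → 0 < p k ∧ 0 < q k ∧ (g * B k)^2 < p k * q k := by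
      intro k hk
      have hppos : 0 < p k := by simp only [hp]; split_ifs <;> nlinarith
      have hqpos : 0 < q k := by simp only [hq']; split_ifs <;> nlinarith
      refine ⟨hppos, hqpos, ?_⟩
      by_cases h0 : k = 0
      · have e1 : p k = 2*α := by simp only [hp]; rw [if_pos h0]
        have e2 : q k = 1 := by simp only [hq']; rw [if_neg (by omega : ¬ k = N - 2)]
        have e3 : B k = 1 - l := by simp only [hB]; rw [if_pos (Or.inl h0)]
        rw [e1, e2, e3, hα]
        rw [show (2:ℝ) * ((1-l)/(1+l)) * 1 = (2*(1-l))/(1+l) by ring, lt_div_iff₀ h1l']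
        nlinarith [sq_nonneg l, sq_nonneg g, mul_nonneg (sq_nonneg g) h1l.le]
      · by_cases h2 : k = N - 2
        · have e1 : p k = 1 := by simp only [hp]; rw [if_neg h0]
          have e2 : q k = 2*α := by simp only [hq']; rw [if_pos h2]
          have e3 : B k = 1 - l := by simp only [hB]; rw [if_pos (Or.inr h2)]
          rw [e1, e2, e3, hα]
          rw [show (1:ℝ) * (2 * ((1-l)/(1+l))) = (2*(1-l))/(1+l) by ring, lt_div_iff₀ h1l']
          nlinarith [sq_nonneg l, sq_nonneg g, mul_nonneg (sq_nonneg g) h1l.le]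
        · have e1 : p k = 1 := by simp only [hp]; rw [if_neg h0]
          have e2 : q k = 1 := by simp only [hq']; rw [if_neg h2]
          have e3 : B k = 1 := by
            simp only [hB]; rw [if_neg (by omega : ¬ (k = 0 ∨ k = N - 2))]
          rw [e1, e2, e3, mul_one, one_mul]
          exact hg2
    have hnn : ∀ k ∈ Finset.range M,
        0 ≤ p k * (x' k)^2 + q k * (x' (k+1))^2 - 2*(g * B k)*(x' k * x' (k+1)) := by
      intro k hk
      obtain ⟨hppos, hqpos, hlt⟩ := hfacts k (Finset.mem_range.mp hk)
      exact quad_nonneg _ _ _ _ _ hqpos hlt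
    obtain ⟨j, hj⟩ := Function.ne_iff.mp hx
    have hjne : x' (j:ℕ) ≠ 0 := by
      have : x' (j:ℕ) = x j := by simp [hx', j.isLt]
      rw [this]; simpa using hj
    set k0 : ℕ := min (j:ℕ) (N - 2) with hk0
    have hk0mem : k0 ∈ Finset.range M := by
      rw [Finset.mem_range]; omega
    have hor : x' k0 ≠ 0 ∨ x' (k0 + 1) ≠ 0 := by
      by_cases hc : (j:ℕ) ≤ N - 2
      · left
        have : k0 = (j:ℕ) := by omega
        rw [this]; exact hjne
      · right
        have hjv : (j:ℕ) < N := j.isLt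
        have : k0 + 1 = (j:ℕ) := by omega
        rw [this]; exact hjne
    have hpos : 0 < p k0 * (x' k0)^2 + q k0 * (x' (k0+1))^2
        - 2*(g * B k0)*(x' k0 * x' (k0+1)) := by
      obtain ⟨hppos, hqpos, hlt⟩ := hfacts k0 (Finset.mem_range.mp hk0mem)
      exact quad_pos _ _ _ _ _ hppos hqpos hlt hor
    have final : 0 < x ⬝ᵥ (((2 : ℝ) • Theta N l - g • P2 N l) *ᵥ x) := by
      rw [hQ]
      exact Finset.sum_pos' hnn ⟨k0, hk0mem, hpos⟩
    simpa using final
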